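/- In the push-sum distributed optimization setup, define the block averages z̄_p^k := (1/N_p) Σ_{i∈V_p} ẑ_{i,p}^k, z̄^k := col((z̄_p^k)_{p=1,…,P}), and D := diag((N_p I_{n_p})_p). Then for every y* ∈ Y* and every k ∈ ℕ: ‖z̄^{k+1} − y*‖²_D ≤ ‖z̄^k − y*‖²_D − 2γ^k (f(z̄^k) − f(y*)) + 4L γ^k Σ_{i=1}^I Σ_{p : i∈V_p} ‖z̄_p^k − ŷ_{i,p}^{k+1}‖ + (γ^k)² I L². -/

import Mathlib

open Finset

noncomputable section PushSum12

/-- Euclidean inner product on the block space `ℝ^n = Π_p ℝ^{n_p}`. -/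
def dotn {P : ℕ} (np : Fin P → ℕ) (u v : (p : Fin P) → Fin (np p) → ℝ) : ℝ :=
  ∑ p, ∑ r, u p r * v p r

lemma dotn_sub {P : ℕ} (np : Fin P → ℕ) (g u v : (p : Fin P) → Fin (np p) → ℝ) :
    dotn np g (u - v) = dotn np g u - dotn np g v := by
  simp [dotn, mul_sub, Finset.sum_sub_distrib]

lemma dotn_self_nonneg {P : ℕ} (np : Fin P → ℕ) (g : (p : Fin P) → Fin (np p) → ℝ) :
    0 ≤ dotn np g g := by
  refine Finset.sum_nonneg fun p _ => Finset.sum_nonneg fun r _ => mul_self_nonneg _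

lemma abs_sum_mul_le_sqrt {n : ℕ} (a b : Fin n → ℝ) :
    |∑ r, a r * b r| ≤ Real.sqrt (∑ r, a r ^ 2) * Real.sqrt (∑ r, b r ^ 2) := by
  rcases abs_cases (∑ r, a r * b r) with ⟨h, _⟩ | ⟨h, _⟩
  · rw [h]; exact Real.sum_mul_le_sqrt_mul_sqrt _ _ _
  · rw [h]
    have := Real.sum_mul_le_sqrt_mul_sqrt Finset.univ (fun r => -a r) b
    simp only [neg_mul, Finset.sum_neg_distrib, neg_sq] at this
    linarith

def epr {P : ℕ} (np : Fin P → ℕ) (p : Fin P) (r : Fin (np p)) :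
    (q : Fin P) → Fin (np q) → ℝ :=
  Pi.single p (Pi.single r 1)

lemma pi_expand {P : ℕ} (np : Fin P → ℕ) (v : (p : Fin P) → Fin (np p) → ℝ) :
    v = ∑ p, ∑ r, (v p r) • epr np p r := by
  classical
  conv_lhs => rw [← Finset.univ_sum_single v]
  refine Finset.sum_congr rfl fun p _ => ?_
  have h1 : v p = ∑ r, Pi.single r (v p r) := (Finset.univ_sum_single (v p)).symm
  have h2 : Pi.single p (v p)
      = (LinearMap.single ℝ (fun p => Fin (np p) → ℝ) p) (v p) := rfl
  rw [h2]
  conv_lhs => rw [h1]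
  rw [map_sum]
  refine Finset.sum_congr rfl fun r _ => ?_
  have h3 : Pi.single r (v p r) = (v p r) • (Pi.single (M := fun _ : Fin (np p) => ℝ) r (1:ℝ)) := by
    rw [← Pi.single_smul, smul_eq_mul, mul_one]
  rw [h3, map_smul]
  rfl

lemma exists_subgrad {P : ℕ} (np : Fin P → ℕ)
    (f : ((p : Fin P) → Fin (np p) → ℝ) → ℝ)
    (hf : ConvexOn ℝ Set.univ f) (x : (p : Fin P) → Fin (np p) → ℝ) :
    ∃ g, ∀ z, f x + dotn np g (z - x) ≤ f z := by
  classical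
  have hcont : Continuous f := hf.locallyLipschitz.continuous
  set U : Set (((p : Fin P) → Fin (np p) → ℝ) × ℝ) := {q | f q.1 < q.2} with hU
  have hUopen : IsOpen U := isOpen_lt (hcont.comp continuous_fst) continuous_snd
  have hUconv : Convex ℝ U := by
    rintro ⟨z1, t1⟩ h1 ⟨z2, t2⟩ h2 a b ha hb hab
    simp only [hU, Set.mem_setOf_eq] at h1 h2 ⊢
    have hcc := hf.2 (Set.mem_univ z1) (Set.mem_univ z2) ha hb hab
    have hlt : a * f z1 + b * f z2 < a * t1 + b * t2 := by
      rcases eq_or_lt_of_le ha with h | h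
      · have hb1 : b = 1 := by linarith
        simp only [← h, hb1, zero_mul, one_mul, zero_add]; linarith
      · have g1 := mul_lt_mul_of_pos_left h1 h
        have g2 := mul_le_mul_of_nonneg_left h2.le hb
        linarith
    calc f (a • z1 + b • z2) ≤ a * f z1 + b * f z2 := by simpa using hcc
      _ < a * t1 + b * t2 := hlt
  have hxnot : (x, f x) ∉ U := by simp [hU]
  obtain ⟨φ, hφ⟩ := geometric_hahn_banach_open_point hUconv hUopen hxnot
  set a : ℝ := φ (0, 1) with haa
  have hdecomp : ∀ (z : (p : Fin P) → Fin (np p) → ℝ) (t : ℝ),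
      φ (z, t) = φ (z, 0) + t * a := by
    intro z t
    have h : (z, t) = (z, (0:ℝ)) + t • (((0 : (p : Fin P) → Fin (np p) → ℝ)), (1:ℝ)) := by
      simp [Prod.ext_iff]
    rw [h, map_add, map_smul, smul_eq_mul]
  have haneg : a < 0 := by
    have h1 : (x, f x + 1) ∈ U := by simp [hU]
    have h2 := hφ _ h1
    rw [hdecomp x (f x + 1), hdecomp x (f x)] at h2
    linarith
  have hkey : ∀ z, φ (z, 0) + f z * a ≤ φ (x, 0) + f x * a := by
    intro z
    by_contra h'
    push_neg at h'
    set X := φ (z, 0) + f z * a with hX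
    set C := φ (x, 0) + f x * a with hC
    have hCX : C - X < 0 := by linarith
    set ε : ℝ := (C - X) / a with hε
    have hεpos : 0 < ε := div_pos_of_neg_of_neg hCX haneg
    have hmem : (z, f z + ε) ∈ U := by simp [hU]; linarith
    have h3 := hφ _ hmem
    rw [hdecomp z (f z + ε), hdecomp x (f x)] at h3
    have hεa : ε * a = C - X := by
      rw [hε, div_mul_cancel₀ _ (ne_of_lt haneg)]
    have hexp : (f z + ε) * a = f z * a + ε * a := by ring
    rw [hexp] at h3
    rw [hX, hC] at hεa
    linarith
  set ψ : ((p : Fin P) → Fin (np p) → ℝ) →L[ℝ] ℝ :=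
    φ.comp (ContinuousLinearMap.inl ℝ _ ℝ) with hψ
  have hψval : ∀ z, ψ z = φ (z, 0) := fun z => rfl
  refine ⟨fun p r => (-a)⁻¹ * ψ (epr np p r), fun z => ?_⟩
  have hdot : ∀ v, dotn np (fun p r => (-a)⁻¹ * ψ (epr np p r)) v
      = (-a)⁻¹ * ψ v := by
    intro v
    conv_rhs => rw [pi_expand np v]
    rw [map_sum, Finset.mul_sum, dotn]
    refine Finset.sum_congr rfl fun p _ => ?_
    rw [map_sum, Finset.mul_sum]
    refine Finset.sum_congr rfl fun r _ => ?_
    rw [map_smul, smul_eq_mul]; ring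
  have hna : 0 < -a := by linarith
  have h2 := hkey z
  rw [← hψval z, ← hψval x] at h2
  have hd := hdot (z - x)
  rw [map_sub] at hd
  rw [hd]
  have h4 : ψ z - ψ x ≤ (f x - f z) * a := by linarith
  have h5 := mul_le_mul_of_nonneg_left h4 (inv_nonneg.2 hna.le)
  have h6 : (-a)⁻¹ * ((f x - f z) * a) = f z - f x := by
    rw [inv_neg, neg_mul, ← mul_assoc, mul_comm a⁻¹, mul_assoc, inv_mul_cancel₀ (ne_of_lt haneg), mul_one]; ring
  rw [h6] at h5
  linarith


/-- The basic inequality for the block averages `z̄^k` in the END push-sum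
subgradient method (Lemma for Theorem on push-sum DGD). -/
theorem stmt_12 (I P : ℕ) (np : Fin P → ℕ)
    (V : Fin P → Finset (Fin I)) (Ns : Fin I → Finset (Fin P))
    (hNs : ∀ i p, p ∈ Ns i → i ∈ V p)
    (f : Fin I → ((p : Fin P) → Fin (np p) → ℝ) → ℝ)
    (hconv : ∀ i, ConvexOn ℝ Set.univ (f i))
    (hdep : ∀ i y y', (∀ p ∈ Ns i, y p = y' p) → f i y = f i y')
    (L : ℝ) (hL : 0 < L)
    (hsubbd : ∀ (i : Fin I) (y g : (p : Fin P) → Fin (np p) → ℝ),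
      (∀ z, f i y + dotn np g (z - y) ≤ f i z) → Real.sqrt (dotn np g g) ≤ L)
    (Wk : ℕ → (p : Fin P) → Matrix (V p) (V p) ℝ)
    (hWnn : ∀ k p (i j : V p), 0 ≤ Wk k p i j)
    (hWdiag : ∀ k p (i : V p), 0 < Wk k p i i)
    (hWcol : ∀ k p (j : V p), ∑ i, Wk k p i j = 1)
    (ν : ℝ) (hν : 0 < ν)
    (hWν : ∀ k p (i j : V p), 0 < Wk k p i j → ν ≤ Wk k p i j)
    (γ : ℕ → ℝ) (hγ : ∀ k, 0 < γ k)
    -- the push-sum iteration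
    (qs : ℕ → (p : Fin P) → (V p) → ℝ)
    (ws zs ys : ℕ → (p : Fin P) → (V p) → Fin (np p) → ℝ)
    (g : ℕ → Fin I → (p : Fin P) → Fin (np p) → ℝ)
    (hq0 : ∀ p (i : V p), qs 0 p i = 1)
    (hq : ∀ k p (i : V p), qs (k + 1) p i = ∑ j, Wk k p i j * qs k p j)
    (hw : ∀ k p (i : V p) r, ws (k + 1) p i r = ∑ j, Wk k p i j * zs k p j r)
    (hy : ∀ k p (i : V p) r, ys (k + 1) p i r = ws (k + 1) p i r / qs (k + 1) p i)
    (hg0 : ∀ k (i : Fin I) (p : Fin P), p ∉ Ns i → g (k + 1) i p = 0)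
    (hgsub : ∀ (k : ℕ) (i : Fin I),
      ∀ z, f i (fun p => if h : i ∈ V p then ys (k + 1) p ⟨i, h⟩ else 0)
          + dotn np (g (k + 1) i)
              (z - fun p => if h : i ∈ V p then ys (k + 1) p ⟨i, h⟩ else 0)
        ≤ f i z)
    (hz : ∀ k p (i : V p) r,
      zs (k + 1) p i r = ws (k + 1) p i r - γ k * g (k + 1) (↑i) p r) :
    -- conclusion: for every minimizer y* and every k, the averaged inequality holds
    ∀ ystar : (p : Fin P) → Fin (np p) → ℝ,
      (∀ y, ∑ i, f i ystar ≤ ∑ i, f i y) →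
      ∀ k : ℕ,
        (∑ p, ((V p).card : ℝ) * ∑ r,
            ((((V p).card : ℝ))⁻¹ * (∑ i, zs (k + 1) p i r) - ystar p r) ^ 2)
          ≤ (∑ p, ((V p).card : ℝ) * ∑ r,
              ((((V p).card : ℝ))⁻¹ * (∑ i, zs k p i r) - ystar p r) ^ 2)
            - 2 * γ k * ((∑ i, f i fun p r => (((V p).card : ℝ))⁻¹ * ∑ i', zs k p i' r)
                - ∑ i, f i ystar)
            + 4 * L * γ k * ∑ i : Fin I, ∑ p : Fin P,
                (if h : i ∈ V p then
                  Real.sqrt (∑ r, ((((V p).card : ℝ))⁻¹ * (∑ i', zs k p i' r)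
                      - ys (k + 1) p ⟨i, h⟩ r) ^ 2)
                 else 0)
            + (γ k) ^ 2 * I * L ^ 2 := by
  classical
  intro ystar hstar k
  -- notation
  set ZB : (p : Fin P) → Fin (np p) → ℝ :=
    fun p r => (((V p).card : ℝ))⁻¹ * ∑ i', zs k p i' r with hZB
  set ty : Fin I → (p : Fin P) → Fin (np p) → ℝ :=
    fun i p => if h : i ∈ V p then ys (k + 1) p ⟨i, h⟩ else 0 with hty
  set S : Fin I → ℝ := fun i => ∑ p : Fin P,
      (if h : i ∈ V p then
        Real.sqrt (∑ r, (ZB p r - ys (k + 1) p ⟨i, h⟩ r) ^ 2)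
       else 0) with hS
  -- step A: recursion for the block sums
  have hrec : ∀ p r, (∑ i : {x // x ∈ V p}, zs (k + 1) p i r)
      = (∑ i : {x // x ∈ V p}, zs k p i r)
        - γ k * ∑ i : {x // x ∈ V p}, g (k + 1) (↑i) p r := by
    intro p r
    rw [Finset.sum_congr rfl fun (i : {x // x ∈ V p}) _ => by rw [hz, hw]]
    rw [Finset.sum_sub_distrib, ← Finset.mul_sum]
    congr 1
    rw [Finset.sum_comm]
    refine Finset.sum_congr rfl fun j _ => ?_
    rw [← Finset.sum_mul, hWcol k p j, one_mul]
  -- step B: per-block identity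
  have hiden : ∀ p, ((V p).card : ℝ) * ∑ r,
        ((((V p).card : ℝ))⁻¹ * (∑ i, zs (k + 1) p i r) - ystar p r) ^ 2
      = ((V p).card : ℝ) * ∑ r, (ZB p r - ystar p r) ^ 2
        - 2 * γ k * ∑ r, (ZB p r - ystar p r) * (∑ i : {x // x ∈ V p}, g (k + 1) (↑i) p r)
        + (γ k) ^ 2 * (((V p).card : ℝ))⁻¹
            * ∑ r, (∑ i : {x // x ∈ V p}, g (k + 1) (↑i) p r) ^ 2 := by
    intro p
    by_cases hp : (V p).card = 0
    · have he : V p = ∅ := Finset.card_eq_zero.mp hp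
      have hemp : IsEmpty {x // x ∈ V p} := Finset.isEmpty_coe_sort.mpr he
      have h0 : ∀ (F : {x // x ∈ V p} → ℝ), (∑ i : {x // x ∈ V p}, F i) = 0 := fun F => by
        rw [@Finset.univ_eq_empty _ _ hemp, Finset.sum_empty]
      simp only [hp, Nat.cast_zero, zero_mul, h0, hZB]
      simp [h0]
    · have hNp : (((V p).card : ℝ)) ≠ 0 := Nat.cast_ne_zero.mpr hp
      have hpt : ∀ r, (((V p).card : ℝ))⁻¹ * (∑ i, zs (k + 1) p i r) - ystar p r
          = (ZB p r - ystar p r)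
            - γ k * (((V p).card : ℝ))⁻¹ * (∑ i : {x // x ∈ V p}, g (k + 1) (↑i) p r) := by
        intro r
        rw [hrec p r, hZB]
        ring
      rw [Finset.sum_congr rfl fun r _ => by rw [hpt r]]
      conv_lhs => rw [Finset.mul_sum]
      conv_rhs => rw [Finset.mul_sum, Finset.mul_sum, Finset.mul_sum]
      rw [← Finset.sum_sub_distrib, ← Finset.sum_add_distrib]
      refine Finset.sum_congr rfl fun r _ => ?_
      have hinv : (((V p).card : ℝ)) * (((V p).card : ℝ))⁻¹ = 1 := mul_inv_cancel₀ hNp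
      linear_combination
        (-(2 * γ k * ((ZB p r - ystar p r) * (∑ i : {x // x ∈ V p}, g (k + 1) (↑i) p r)))
          + (γ k) ^ 2 * (((V p).card : ℝ))⁻¹
              * (∑ i : {x // x ∈ V p}, g (k + 1) (↑i) p r) ^ 2) * hinv

  -- norms of subgradients
  have hgL2 : ∀ (i : Fin I) (gg y : (p : Fin P) → Fin (np p) → ℝ),
      (∀ z, f i y + dotn np gg (z - y) ≤ f i z) → ∑ p, ∑ r, (gg p r) ^ 2 ≤ L ^ 2 := by
    intro i gg y hsgg
    have h1 := hsubbd i y gg hsgg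
    have h2 : 0 ≤ dotn np gg gg := dotn_self_nonneg np gg
    have h3 : dotn np gg gg ≤ L ^ 2 := by
      calc dotn np gg gg = Real.sqrt (dotn np gg gg) ^ 2 := (Real.sq_sqrt h2).symm
        _ ≤ L ^ 2 := pow_le_pow_left₀ (Real.sqrt_nonneg _) h1 2
    have h4 : dotn np gg gg = ∑ p, ∑ r, (gg p r) ^ 2 := by simp [dotn, sq]
    linarith [h4 ▸ h3]
  have hblock : ∀ (gg : (p : Fin P) → Fin (np p) → ℝ),
      (∑ p, ∑ r, (gg p r) ^ 2 ≤ L ^ 2) → ∀ p, Real.sqrt (∑ r, (gg p r) ^ 2) ≤ L := by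
    intro gg hgg p
    have h1 : ∑ r, (gg p r) ^ 2 ≤ L ^ 2 :=
      le_trans (Finset.single_le_sum (f := fun q => ∑ r, (gg q r) ^ 2)
        (fun q _ => Finset.sum_nonneg fun r _ => sq_nonneg _) (Finset.mem_univ p)) hgg
    calc Real.sqrt (∑ r, (gg p r) ^ 2) ≤ Real.sqrt (L ^ 2) := Real.sqrt_le_sqrt h1
      _ = L := Real.sqrt_sq hL.le
  -- reindexing double sums
  have hswap : ∀ (F : Fin I → Fin P → ℝ),
      (∑ p, ∑ i : {x // x ∈ V p}, F (↑i) p)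
        = ∑ i : Fin I, ∑ p, (if i ∈ V p then F i p else 0) := by
    intro F
    have h1 : ∀ p, (∑ i : {x // x ∈ V p}, F (↑i) p)
        = ∑ i : Fin I, (if i ∈ V p then F i p else 0) := by
      intro p
      rw [Finset.sum_coe_sort (V p) (fun i => F i p)]
      rw [Finset.sum_ite_mem Finset.univ (V p) (fun i => F i p), Finset.univ_inter]
    rw [Finset.sum_congr rfl fun p _ => h1 p, Finset.sum_comm]
  -- bound on the gradient-sum term
  have hR : (∑ p, (((V p).card : ℝ))⁻¹ * ∑ r, (∑ i : {x // x ∈ V p}, g (k + 1) (↑i) p r) ^ 2)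
      ≤ I * L ^ 2 := by
    have h1 : ∀ p, (((V p).card : ℝ))⁻¹ * ∑ r, (∑ i : {x // x ∈ V p}, g (k + 1) (↑i) p r) ^ 2
        ≤ ∑ i : {x // x ∈ V p}, ∑ r, (g (k + 1) (↑i) p r) ^ 2 := by
      intro p
      have hcs : ∀ r : Fin (np p), (∑ i : {x // x ∈ V p}, g (k + 1) (↑i) p r) ^ 2
          ≤ ((V p).card : ℝ) * ∑ i : {x // x ∈ V p}, (g (k + 1) (↑i) p r) ^ 2 := by
        intro r
        have h := sq_sum_le_card_mul_sum_sq
          (s := (Finset.univ : Finset {x // x ∈ V p})) (f := fun i => g (k + 1) (↑i) p r)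
        simpa [Finset.card_univ] using h
      calc (((V p).card : ℝ))⁻¹ * ∑ r, (∑ i : {x // x ∈ V p}, g (k + 1) (↑i) p r) ^ 2
          ≤ (((V p).card : ℝ))⁻¹
              * ∑ r, ((V p).card : ℝ) * ∑ i : {x // x ∈ V p}, (g (k + 1) (↑i) p r) ^ 2 :=
            mul_le_mul_of_nonneg_left (Finset.sum_le_sum fun r _ => hcs r) (by positivity)
        _ = ((((V p).card : ℝ))⁻¹ * ((V p).card : ℝ))
              * ∑ r, ∑ i : {x // x ∈ V p}, (g (k + 1) (↑i) p r) ^ 2 := by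
            rw [← Finset.mul_sum]; ring
        _ ≤ 1 * ∑ r, ∑ i : {x // x ∈ V p}, (g (k + 1) (↑i) p r) ^ 2 := by
            refine mul_le_mul_of_nonneg_right ?_ (by positivity)
            rcases eq_or_ne (((V p).card : ℝ)) 0 with h | h
            · simp [h]
            · rw [inv_mul_cancel₀ h]
        _ = ∑ i : {x // x ∈ V p}, ∑ r, (g (k + 1) (↑i) p r) ^ 2 := by
            rw [one_mul, Finset.sum_comm]
    calc (∑ p, (((V p).card : ℝ))⁻¹ * ∑ r, (∑ i : {x // x ∈ V p}, g (k + 1) (↑i) p r) ^ 2)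
        ≤ ∑ p, ∑ i : {x // x ∈ V p}, ∑ r, (g (k + 1) (↑i) p r) ^ 2 :=
          Finset.sum_le_sum fun p _ => h1 p
      _ = ∑ i : Fin I, ∑ p, (if i ∈ V p then ∑ r, (g (k + 1) i p r) ^ 2 else 0) :=
          hswap (fun i p => ∑ r, (g (k + 1) i p r) ^ 2)
      _ ≤ ∑ i : Fin I, ∑ p, ∑ r, (g (k + 1) i p r) ^ 2 := by
          refine Finset.sum_le_sum fun i _ => Finset.sum_le_sum fun p _ => ?_
          split
          · exact le_rfl
          · positivity
      _ ≤ ∑ _i : Fin I, L ^ 2 :=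
          Finset.sum_le_sum fun i _ => hgL2 i (g (k + 1) i) (ty i) (hgsub k i)
      _ = I * L ^ 2 := by
          simp [Finset.sum_const, Finset.card_univ, nsmul_eq_mul]
  -- subgradients at the average point
  choose sg hsg using fun i : Fin I => exists_subgrad np (f i) (hconv i) ZB
  -- the per-agent lower bound
  have hTi : ∀ i : Fin I, f i ZB - f i ystar - 2 * (L * S i)
      ≤ dotn np (g (k + 1) i) (ZB - ystar) := by
    intro i
    set u : (p : Fin P) → Fin (np p) → ℝ := fun p => if p ∈ Ns i then ty i p else ZB p with hu
    have hfu : f i u = f i (ty i) := hdep i u (ty i) (fun p hp => by simp [hu, hp])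
    have hA2 := hsg i u
    have hA1 := hgsub k i ystar
    have hA0 := hgsub k i ZB
    have hsgL : ∑ p, ∑ r, (sg i p r) ^ 2 ≤ L ^ 2 := hgL2 i (sg i) ZB (hsg i)
    have hgiL : ∑ p, ∑ r, (g (k + 1) i p r) ^ 2 ≤ L ^ 2 :=
      hgL2 i (g (k + 1) i) (ty i) (hgsub k i)
    have hA4 : -(L * S i) ≤ dotn np (sg i) (u - ZB) := by
      have hterm : ∀ p, -(L * (if h : i ∈ V p then
            Real.sqrt (∑ r, (ZB p r - ys (k + 1) p ⟨i, h⟩ r) ^ 2) else 0))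
          ≤ ∑ r, sg i p r * (u - ZB) p r := by
        intro p
        by_cases hp : p ∈ Ns i
        · have him : i ∈ V p := hNs i p hp
          have hsub : ∀ r, (u - ZB) p r = ys (k + 1) p ⟨i, him⟩ r - ZB p r := by
            intro r; simp [Pi.sub_apply, hu, hp, hty, him]
          have heq : (∑ r, ((u - ZB) p r) ^ 2)
              = ∑ r, (ZB p r - ys (k + 1) p ⟨i, him⟩ r) ^ 2 :=
            Finset.sum_congr rfl fun r _ => by rw [hsub r]; ring
          rw [dif_pos him]
          have h1 : |∑ r, sg i p r * (u - ZB) p r|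
              ≤ L * Real.sqrt (∑ r, (ZB p r - ys (k + 1) p ⟨i, him⟩ r) ^ 2) := by
            calc |∑ r, sg i p r * (u - ZB) p r|
                ≤ Real.sqrt (∑ r, (sg i p r) ^ 2)
                    * Real.sqrt (∑ r, ((u - ZB) p r) ^ 2) :=
                  abs_sum_mul_le_sqrt (fun r => sg i p r) (fun r => (u - ZB) p r)
              _ ≤ L * Real.sqrt (∑ r, ((u - ZB) p r) ^ 2) :=
                  mul_le_mul_of_nonneg_right (hblock (sg i) hsgL p) (Real.sqrt_nonneg _)
              _ = L * Real.sqrt (∑ r, (ZB p r - ys (k + 1) p ⟨i, him⟩ r) ^ 2) := by rw [heq]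
          linarith [neg_abs_le (∑ r, sg i p r * (u - ZB) p r), h1]
        · have hup : ∀ r, (u - ZB) p r = 0 := by
            intro r; simp [hu, hp, Pi.sub_apply]
          have hz0 : (∑ r, sg i p r * (u - ZB) p r) = 0 := by
            refine Finset.sum_eq_zero fun r _ => by rw [hup r, mul_zero]
          rw [hz0]
          have hd0 : 0 ≤ (if h : i ∈ V p then
              Real.sqrt (∑ r, (ZB p r - ys (k + 1) p ⟨i, h⟩ r) ^ 2) else 0) := by
            split
            · exact Real.sqrt_nonneg _
            · exact le_rfl
          exact neg_nonpos.mpr (mul_nonneg hL.le hd0)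
      have hsum : -(L * S i) = ∑ p, -(L * (if h : i ∈ V p then
          Real.sqrt (∑ r, (ZB p r - ys (k + 1) p ⟨i, h⟩ r) ^ 2) else 0)) := by
        rw [hS, Finset.mul_sum, ← Finset.sum_neg_distrib]
      rw [hsum, dotn]
      exact Finset.sum_le_sum fun p _ => hterm p
    have hA5 : -(L * S i) ≤ dotn np (g (k + 1) i) (ZB - ty i) := by
      have hterm : ∀ p, -(L * (if h : i ∈ V p then
            Real.sqrt (∑ r, (ZB p r - ys (k + 1) p ⟨i, h⟩ r) ^ 2) else 0))
          ≤ ∑ r, g (k + 1) i p r * (ZB - ty i) p r := by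
        intro p
        by_cases hp : i ∈ V p
        · have hsub : ∀ r, (ZB - ty i) p r = ZB p r - ys (k + 1) p ⟨i, hp⟩ r := by
            intro r; simp [Pi.sub_apply, hty, hp]
          have heq : (∑ r, ((ZB - ty i) p r) ^ 2)
              = ∑ r, (ZB p r - ys (k + 1) p ⟨i, hp⟩ r) ^ 2 :=
            Finset.sum_congr rfl fun r _ => by rw [hsub r]
          rw [dif_pos hp]
          have h1 : |∑ r, g (k + 1) i p r * (ZB - ty i) p r|
              ≤ L * Real.sqrt (∑ r, (ZB p r - ys (k + 1) p ⟨i, hp⟩ r) ^ 2) := by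
            calc |∑ r, g (k + 1) i p r * (ZB - ty i) p r|
                ≤ Real.sqrt (∑ r, (g (k + 1) i p r) ^ 2)
                    * Real.sqrt (∑ r, ((ZB - ty i) p r) ^ 2) :=
                  abs_sum_mul_le_sqrt (fun r => g (k + 1) i p r) (fun r => (ZB - ty i) p r)
              _ ≤ L * Real.sqrt (∑ r, ((ZB - ty i) p r) ^ 2) :=
                  mul_le_mul_of_nonneg_right (hblock (g (k + 1) i) hgiL p) (Real.sqrt_nonneg _)
              _ = L * Real.sqrt (∑ r, (ZB p r - ys (k + 1) p ⟨i, hp⟩ r) ^ 2) := by rw [heq]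
          linarith [neg_abs_le (∑ r, g (k + 1) i p r * (ZB - ty i) p r), h1]
        · have h0 : g (k + 1) i p = 0 := hg0 k i p (fun c => hp (hNs i p c))
          have hz0 : (∑ r, g (k + 1) i p r * (ZB - ty i) p r) = 0 := by
            refine Finset.sum_eq_zero fun r _ => by rw [show g (k + 1) i p r = 0 from by rw [h0]; rfl, zero_mul]
          rw [hz0]
          have hd0 : 0 ≤ (if h : i ∈ V p then
              Real.sqrt (∑ r, (ZB p r - ys (k + 1) p ⟨i, h⟩ r) ^ 2) else 0) := by
            split
            · exact Real.sqrt_nonneg _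
            · exact le_rfl
          exact neg_nonpos.mpr (mul_nonneg hL.le hd0)
      have hsum : -(L * S i) = ∑ p, -(L * (if h : i ∈ V p then
          Real.sqrt (∑ r, (ZB p r - ys (k + 1) p ⟨i, h⟩ r) ^ 2) else 0)) := by
        rw [hS, Finset.mul_sum, ← Finset.sum_neg_distrib]
      rw [hsum, dotn]
      exact Finset.sum_le_sum fun p _ => hterm p
    have hE1 := dotn_sub np (g (k + 1) i) ZB ystar
    have hE2 := dotn_sub np (g (k + 1) i) ZB (ty i)
    have hE3 := dotn_sub np (g (k + 1) i) ystar (ty i)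
    have hE4 := dotn_sub np (sg i) u ZB
    have hA1' : f i (ty i) + (dotn np (g (k + 1) i) ystar - dotn np (g (k + 1) i) (ty i))
        ≤ f i ystar := by
      calc f i (ty i) + (dotn np (g (k + 1) i) ystar - dotn np (g (k + 1) i) (ty i))
          = f i (ty i) + dotn np (g (k + 1) i) (ystar - ty i) := by rw [hE3]
        _ ≤ f i ystar := hA1
    rw [hE1]
    rw [hE2] at hA5
    rw [hE4] at hA4
    linarith [hA2, hfu, hA4, hA5, hA1']
  -- summed lower bound for the cross term
  have hT : (∑ i, f i ZB) - (∑ i, f i ystar) - 2 * L * (∑ i, S i)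
      ≤ ∑ p, ∑ r, (ZB p r - ystar p r) * (∑ i : {x // x ∈ V p}, g (k + 1) (↑i) p r) := by
    have hre : (∑ p, ∑ r, (ZB p r - ystar p r) * (∑ i : {x // x ∈ V p}, g (k + 1) (↑i) p r))
        = ∑ i : Fin I, dotn np (g (k + 1) i) (ZB - ystar) := by
      have h1 : ∀ p, (∑ r, (ZB p r - ystar p r) * (∑ i : {x // x ∈ V p}, g (k + 1) (↑i) p r))
          = ∑ i : {x // x ∈ V p}, ∑ r, (ZB p r - ystar p r) * g (k + 1) (↑i) p r := by
        intro p
        rw [Finset.sum_congr rfl fun r _ => Finset.mul_sum Finset.univ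
          (fun i : {x // x ∈ V p} => g (k + 1) (↑i) p r) (ZB p r - ystar p r),
          Finset.sum_comm]
      rw [Finset.sum_congr rfl fun p _ => h1 p,
        hswap (fun i p => ∑ r, (ZB p r - ystar p r) * g (k + 1) i p r)]
      refine Finset.sum_congr rfl fun i _ => ?_
      rw [dotn]
      refine Finset.sum_congr rfl fun p _ => ?_
      by_cases hp : i ∈ V p
      · rw [if_pos hp]
        exact Finset.sum_congr rfl fun r _ => by rw [Pi.sub_apply, Pi.sub_apply]; ring
      · rw [if_neg hp]
        have h0 : g (k + 1) i p = 0 := hg0 k i p (fun c => hp (hNs i p c))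
        refine (Finset.sum_eq_zero fun r _ => ?_).symm
        rw [show g (k + 1) i p r = 0 from by rw [h0]; rfl, zero_mul]
    rw [hre]
    have hs := Finset.sum_le_sum (fun i (_ : i ∈ (Finset.univ : Finset (Fin I))) => hTi i)
    rw [Finset.sum_sub_distrib, Finset.sum_sub_distrib] at hs
    have hms : (∑ i : Fin I, 2 * (L * S i)) = 2 * L * ∑ i, S i := by
      rw [Finset.mul_sum]
      exact Finset.sum_congr rfl fun i _ => by ring
    linarith [hs, hms]
  -- split the squared distance
  have hsplit : (∑ p, ((V p).card : ℝ) * ∑ r,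
        ((((V p).card : ℝ))⁻¹ * (∑ i, zs (k + 1) p i r) - ystar p r) ^ 2)
      = (∑ p, ((V p).card : ℝ) * ∑ r, (ZB p r - ystar p r) ^ 2)
        - 2 * γ k * (∑ p, ∑ r, (ZB p r - ystar p r)
            * (∑ i : {x // x ∈ V p}, g (k + 1) (↑i) p r))
        + (γ k) ^ 2 * (∑ p, (((V p).card : ℝ))⁻¹
            * ∑ r, (∑ i : {x // x ∈ V p}, g (k + 1) (↑i) p r) ^ 2) := by
    have e2 : (∑ p, (2 * γ k * ∑ r, (ZB p r - ystar p r)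
          * (∑ i : {x // x ∈ V p}, g (k + 1) (↑i) p r)))
        = 2 * γ k * (∑ p, ∑ r, (ZB p r - ystar p r)
            * (∑ i : {x // x ∈ V p}, g (k + 1) (↑i) p r)) := by
      rw [Finset.mul_sum]
    have e3 : (∑ p, ((γ k) ^ 2 * (((V p).card : ℝ))⁻¹
          * ∑ r, (∑ i : {x // x ∈ V p}, g (k + 1) (↑i) p r) ^ 2))
        = (γ k) ^ 2 * (∑ p, (((V p).card : ℝ))⁻¹
            * ∑ r, (∑ i : {x // x ∈ V p}, g (k + 1) (↑i) p r) ^ 2) := by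
      rw [Finset.mul_sum]
      exact Finset.sum_congr rfl fun p _ => by ring
    rw [Finset.sum_congr rfl fun p _ => hiden p]
    rw [Finset.sum_add_distrib, Finset.sum_sub_distrib, e2, e3]
  -- put everything together
  have h2γ : (0:ℝ) ≤ 2 * γ k := by linarith [hγ k]
  have hTmul := mul_le_mul_of_nonneg_left hT h2γ
  have hRmul := mul_le_mul_of_nonneg_left hR (sq_nonneg (γ k))
  rw [hsplit]
  simp only [hZB, hS, hty] at hTmul hRmul ⊢
  nlinarith [hTmul, hRmul]
end PushSum12
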